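/- Let N ⊆ ℤ^d \ {0} be a finite nonempty set and let X ⊂ ℤ^d be finite and nonempty. Define X_in = {(y,x) : y ∉ X, x ∈ X, x−y ∈ N} (arcs entering X) and X_out = {(x,y) : x ∈ X, y ∉ X, y−x ∈ N} (arcs leaving X). Then there exists a bijection λ : X_in → X_out such that λ((y,x)) = (x',y') implies x + x' = y + y' (in particular the entering arc (y,x) and the leaving arc (x',y') have the same difference vector x − y = y' − x' ∈ N). -/

import Mathlib

/-- The set of arcs entering `X`: pairs `(y,x)` with `y ∉ X`, `x ∈ X` and
`x − y ∈ N`. -/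
def ArcsIn {d : ℕ} (N : Finset (Fin d → ℤ)) (X : Set (Fin d → ℤ)) :
    Set ((Fin d → ℤ) × (Fin d → ℤ)) :=
  {p | p.1 ∉ X ∧ p.2 ∈ X ∧ p.2 - p.1 ∈ N}

/-- The set of arcs leaving `X`: pairs `(x,y)` with `x ∈ X`, `y ∉ X` and
`y − x ∈ N`. -/
def ArcsOut {d : ℕ} (N : Finset (Fin d → ℤ)) (X : Set (Fin d → ℤ)) :
    Set ((Fin d → ℤ) × (Fin d → ℤ)) :=
  {p | p.1 ∈ X ∧ p.2 ∉ X ∧ p.2 - p.1 ∈ N}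

section aux

variable {d : ℕ} (N : Finset (Fin d → ℤ)) (X : Set (Fin d → ℤ))

/-- Entering arcs with fixed direction `v`, parameterized by tail `y`. -/
abbrev InFib (v : Fin d → ℤ) : Type _ := {y : Fin d → ℤ // y ∉ X ∧ y + v ∈ X}

/-- Leaving arcs with fixed direction `v`, parameterized by tail `x`. -/
abbrev OutFib (v : Fin d → ℤ) : Type _ := {x : Fin d → ℤ // x ∈ X ∧ x + v ∉ X}

/-- Decompose entering arcs by direction. -/
def inSigma : ArcsIn N X ≃ Σ v : N, InFib X v where
  toFun p := ⟨⟨p.1.2 - p.1.1, p.2.2.2⟩, ⟨p.1.1, p.2.1, by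
    simpa using p.2.2.1⟩⟩
  invFun s := ⟨(s.2.1, s.2.1 + s.1.1), s.2.2.1, s.2.2.2, by
    simpa using s.1.2⟩
  left_inv p := by
    ext <;> simp
  right_inv s := by
    rcases s with ⟨⟨v, hv⟩, ⟨y, hy⟩⟩
    have h : y + v - y = v := add_sub_cancel_left y v
    refine Sigma.ext (Subtype.ext h) ?_
    exact (Subtype.heq_iff_coe_eq (fun z => by simp [h])).2 rfl

/-- Decompose leaving arcs by direction. -/
def outSigma : ArcsOut N X ≃ Σ v : N, OutFib X v where
  toFun p := ⟨⟨p.1.2 - p.1.1, p.2.2.2⟩, ⟨p.1.1, p.2.1, by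
    simpa using p.2.2.1⟩⟩
  invFun s := ⟨(s.2.1, s.2.1 + s.1.1), s.2.2.1, s.2.2.2, by
    simpa using s.1.2⟩
  left_inv p := by
    ext <;> simp
  right_inv s := by
    rcases s with ⟨⟨v, hv⟩, ⟨x, hx⟩⟩
    have h : x + v - x = v := add_sub_cancel_left x v
    refine Sigma.ext (Subtype.ext h) ?_
    exact (Subtype.heq_iff_coe_eq (fun z => by simp [h])).2 rfl

/-- The fibers over a fixed direction are in bijection. -/
noncomputable def fibEquiv (hX : X.Finite) (v : Fin d → ℤ) :
    InFib X v ≃ OutFib X v := by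
  classical
  let F : Finset (Fin d → ℤ) := hX.toFinset
  let G : Finset (Fin d → ℤ) := F.image (· - v)
  have hG : ∀ y, y ∈ G ↔ y + v ∈ X := by
    intro y
    simp only [G, Finset.mem_image, Set.Finite.mem_toFinset, F]
    constructor
    · rintro ⟨x, hx, rfl⟩; simpa using hx
    · intro h; exact ⟨y + v, h, by simp⟩
  have hcard : G.card = F.card :=
    Finset.card_image_of_injective _ (fun a b h => by simpa using h)
  have hsd : (G \ F).card = (F \ G).card :=
    Finset.card_sdiff_comm hcard
  have e1 : InFib X v ≃ {y // y ∈ G \ F} :=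
    Equiv.subtypeEquivRight (fun y => by
      simp only [Finset.mem_sdiff, hG, Set.Finite.mem_toFinset, F]
      tauto)
  have e2 : {x // x ∈ F \ G} ≃ OutFib X v :=
    Equiv.subtypeEquivRight (fun x => by
      simp only [Finset.mem_sdiff, hG, Set.Finite.mem_toFinset, F])
  exact e1.trans ((Finset.equivOfCardEq hsd).trans e2)

end aux

/-- for a finite neighborhood `N ⊆ ℤ^d \ {0}` and a finite
nonempty `X ⊂ ℤ^d`, there is a bijection `λ : X_in → X_out` such that
`λ((y,x)) = (x',y')` implies `x + x' = y + y'`. -/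
theorem sandpile_in_out_bijection {d : ℕ} (hd : 1 ≤ d)
    (N : Finset (Fin d → ℤ)) (hN : N.Nonempty) (h0 : (0 : Fin d → ℤ) ∉ N)
    (X : Set (Fin d → ℤ)) (hX : X.Finite) (hXne : X.Nonempty) :
    ∃ e : ArcsIn N X ≃ ArcsOut N X,
      ∀ p : ArcsIn N X, p.1.2 + ((e p : (Fin d → ℤ) × (Fin d → ℤ)).1)
        = p.1.1 + ((e p : (Fin d → ℤ) × (Fin d → ℤ)).2) := by
  classical
  let e : ArcsIn N X ≃ ArcsOut N X :=
    (inSigma N X).trans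
      ((Equiv.sigmaCongrRight (fun (v : {x // x ∈ N}) => fibEquiv X hX v.1)).trans
        (outSigma N X).symm)
  refine ⟨e, fun p => ?_⟩
  -- compute the image explicitly
  have : (e p : (Fin d → ℤ) × (Fin d → ℤ)) =
      ((fibEquiv X hX (p.1.2 - p.1.1) ⟨p.1.1, p.2.1, by simpa using p.2.2.1⟩).1,
       (fibEquiv X hX (p.1.2 - p.1.1) ⟨p.1.1, p.2.1, by simpa using p.2.2.1⟩).1
         + (p.1.2 - p.1.1)) := rfl
  rw [this]
  dsimp only
  abel
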